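/- Let (G, L, f) be a labeled graph, let X ⊆ V(G) be a subset of vertices, and let J ⊆ L be a subset of labels. If S is an important (X, V_G(J))-separator of size k, then there is a set J* ⊆ J with |J*| ≤ Σ_{i=1}^{k} (i+1) = k(k+3)/2 such that S is an important (X, V_G(J*))-separator. -/

import Mathlib

set_option maxHeartbeats 1000000

variable {V : Type}

/-- The graph obtained from `G` by deleting the vertex set `S`
(deleted vertices are kept as isolated vertices). -/
def gdelete (G : SimpleGraph V) (S : Set V) : SimpleGraph V where
  Adj u v := G.Adj u v ∧ u ∉ S ∧ v ∉ S
  symm := by constructor; intro u v h; exact ⟨h.1.symm, h.2.2, h.2.1⟩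
  loopless := by constructor; intro v h; exact G.loopless.irrefl v h.1

/-- `R_G(X, S)`: the set of vertices reachable from `X \ S` in `G − S`. -/
def greach (G : SimpleGraph V) (X S : Set V) : Set V :=
  {v | v ∉ S ∧ ∃ x ∈ X \ S, (gdelete G S).Reachable x v}

/-- `S` is an `(X,Y)`-separator: no vertex of `Y` is reachable from `X \ S` in `G − S`. -/
def IsSep (G : SimpleGraph V) (X Y S : Set V) : Prop := Y ∩ greach G X S = ∅

/-- A minimal `(X,Y)`-separator: none of its proper subsets is an `(X,Y)`-separator. -/
def IsMinSep (G : SimpleGraph V) (X Y S : Set V) : Prop :=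
  IsSep G X Y S ∧ ∀ S' ⊂ S, ¬ IsSep G X Y S'

/-- `S'` dominates `S`: `|S'| ≤ |S|` and `R_G(X, S) ⊊ R_G(X, S')`. -/
def SepDominates (G : SimpleGraph V) (X S' S : Set V) : Prop :=
  S'.ncard ≤ S.ncard ∧ greach G X S ⊂ greach G X S'

/-- An important `(X,Y)`-separator: minimal and dominated by no `(X,Y)`-separator. -/
def IsImpSep (G : SimpleGraph V) (X Y S : Set V) : Prop :=
  IsMinSep G X Y S ∧ ¬ ∃ S', IsSep G X Y S' ∧ SepDominates G X S' S

/-- `V_G(J)`: the vertices carrying at least one label from `J`. -/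
def labelVerts {L : Type} (f : V → Set L) (J : Set L) : Set V := {v | (f v ∩ J).Nonempty}

/-! ### Auxiliary machinery -/

open Set

/-- The canonical "cut" of a vertex set `D`: vertices outside `D` that either lie in `X`
or have a neighbour inside `D`. -/
def cutof (G : SimpleGraph V) (X D : Set V) : Set V :=
  {v | v ∉ D ∧ (v ∈ X ∨ ∃ d ∈ D, G.Adj d v)}

lemma mem_greach_start (G : SimpleGraph V) (X : Set V) {T : Set V} {x : V}
    (hx : x ∈ X) (hxT : x ∉ T) : x ∈ greach G X T :=
  ⟨hxT, x, ⟨hx, hxT⟩, SimpleGraph.Reachable.refl x⟩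

lemma greach_adj (G : SimpleGraph V) (X : Set V) {T : Set V} {u v : V}
    (hu : u ∈ greach G X T) (huv : G.Adj u v) (hv : v ∉ T) : v ∈ greach G X T := by
  obtain ⟨huT, x, hx, hr⟩ := hu
  exact ⟨hv, x, hx, hr.trans (SimpleGraph.Adj.reachable (show (gdelete G T).Adj u v from
    ⟨huv, huT, hv⟩))⟩

private lemma walk_ind (G : SimpleGraph V) (X : Set V) {T : Set V} {P : V → Prop}
    (h1 : ∀ u v, P u → u ∈ greach G X T → G.Adj u v → v ∉ T → P v) :
    ∀ {a b : V}, (gdelete G T).Walk a b → a ∈ greach G X T → P a → P b := by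
  intro a b w
  induction w with
  | nil => intro _ h; exact h
  | cons h p ih =>
    intro ha hP
    exact ih (greach_adj G X ha h.1 h.2.2) (h1 _ _ hP ha h.1 h.2.2)

lemma greach_rec (G : SimpleGraph V) (X : Set V) {T : Set V} (P : V → Prop)
    (h0 : ∀ x, x ∈ X → x ∉ T → P x)
    (h1 : ∀ u v, P u → u ∈ greach G X T → G.Adj u v → v ∉ T → P v) :
    ∀ v ∈ greach G X T, P v := by
  rintro v ⟨hvT, x, ⟨hxX, hxT⟩, hr⟩
  obtain ⟨w⟩ := hr
  exact walk_ind G X h1 w (mem_greach_start G X hxX hxT) (h0 x hxX hxT)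

lemma greach_anti (G : SimpleGraph V) (X : Set V) {T₁ T₂ : Set V} (h : T₁ ⊆ T₂) :
    greach G X T₂ ⊆ greach G X T₁ := by
  rintro v ⟨hv, x, ⟨hx1, hx2⟩, hr⟩
  refine ⟨fun hh => hv (h hh), x, ⟨hx1, fun hh => hx2 (h hh)⟩, hr.mono ?_⟩
  rintro a b ⟨hab, ha, hb⟩
  exact ⟨hab, fun hh => ha (h hh), fun hh => hb (h hh)⟩

lemma greach_cutof_subset (G : SimpleGraph V) (X : Set V) (D : Set V) :
    greach G X (cutof G X D) ⊆ D := by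
  intro v hv
  refine greach_rec G X (fun w => w ∈ D) ?_ ?_ v hv
  · intro x hx hxc
    by_contra hxD
    exact hxc ⟨hxD, Or.inl hx⟩
  · intro u w hu _ huw hwc
    by_contra hwD
    exact hwc ⟨hwD, Or.inr ⟨u, hu, huw⟩⟩

lemma subset_greach_cutof (G : SimpleGraph V) (X : Set V) {T D : Set V}
    (h : greach G X T ⊆ D) : greach G X T ⊆ greach G X (cutof G X D) := by
  intro v hv
  refine greach_rec G X (fun w => w ∈ greach G X (cutof G X D)) ?_ ?_ v hv
  · intro x hx hxT
    have hxD : x ∈ D := h (mem_greach_start G X hx hxT)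
    exact mem_greach_start G X hx (fun hc => hc.1 hxD)
  · intro u w hu hug huw hwT
    have hwD : w ∈ D := h (greach_adj G X hug huw hwT)
    exact greach_adj G X hu huw (fun hc => hc.1 hwD)

lemma greach_cutof_greach (G : SimpleGraph V) (X : Set V) (T : Set V) :
    greach G X (cutof G X (greach G X T)) = greach G X T :=
  subset_antisymm (greach_cutof_subset G X (greach G X T))
    (subset_greach_cutof G X (subset_refl _))

lemma cutof_greach_subset (G : SimpleGraph V) (X : Set V) (T : Set V) :
    cutof G X (greach G X T) ⊆ T := by
  rintro v ⟨hvR, hv2⟩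
  by_contra hvT
  rcases hv2 with hx | ⟨d, hd, hadj⟩
  · exact hvR (mem_greach_start G X hx hvT)
  · exact hvR (greach_adj G X hd hadj hvT)

lemma cutof_submod [Fintype V] (G : SimpleGraph V) (X : Set V) (A B : Set V) :
    (cutof G X (A ∪ B)).ncard + (cutof G X (A ∩ B)).ncard ≤
      (cutof G X A).ncard + (cutof G X B).ncard := by
  have h1 : cutof G X (A ∪ B) ∪ cutof G X (A ∩ B) ⊆ cutof G X A ∪ cutof G X B := by
    rintro v (⟨hvU, h⟩ | ⟨hvI, h⟩)
    · rcases h with hX | ⟨d, hd, hadj⟩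
      · exact Or.inl ⟨fun h => hvU (Or.inl h), Or.inl hX⟩
      · rcases hd with hdA | hdB
        · exact Or.inl ⟨fun h => hvU (Or.inl h), Or.inr ⟨d, hdA, hadj⟩⟩
        · exact Or.inr ⟨fun h => hvU (Or.inr h), Or.inr ⟨d, hdB, hadj⟩⟩
    · by_cases hvA : v ∈ A
      · have hvB : v ∉ B := fun hB => hvI ⟨hvA, hB⟩
        rcases h with hX | ⟨d, hd, hadj⟩
        · exact Or.inr ⟨hvB, Or.inl hX⟩
        · exact Or.inr ⟨hvB, Or.inr ⟨d, hd.2, hadj⟩⟩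
      · rcases h with hX | ⟨d, hd, hadj⟩
        · exact Or.inl ⟨hvA, Or.inl hX⟩
        · exact Or.inl ⟨hvA, Or.inr ⟨d, hd.1, hadj⟩⟩
  have h2 : cutof G X (A ∪ B) ∩ cutof G X (A ∩ B) ⊆ cutof G X A ∩ cutof G X B := by
    rintro v ⟨⟨hvU, _⟩, ⟨_, h⟩⟩
    have hvA : v ∉ A := fun h => hvU (Or.inl h)
    have hvB : v ∉ B := fun h => hvU (Or.inr h)
    rcases h with hX | ⟨d, hd, hadj⟩
    · exact ⟨⟨hvA, Or.inl hX⟩, ⟨hvB, Or.inl hX⟩⟩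
    · exact ⟨⟨hvA, Or.inr ⟨d, hd.1, hadj⟩⟩, ⟨hvB, Or.inr ⟨d, hd.2, hadj⟩⟩⟩
  calc (cutof G X (A ∪ B)).ncard + (cutof G X (A ∩ B)).ncard
      = (cutof G X (A ∪ B) ∪ cutof G X (A ∩ B)).ncard
        + (cutof G X (A ∪ B) ∩ cutof G X (A ∩ B)).ncard := by
        rw [Set.ncard_union_add_ncard_inter]
    _ ≤ (cutof G X A ∪ cutof G X B).ncard + (cutof G X A ∩ cutof G X B).ncard :=
        Nat.add_le_add (Set.ncard_le_ncard h1 (Set.toFinite _))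
          (Set.ncard_le_ncard h2 (Set.toFinite _))
    _ = (cutof G X A).ncard + (cutof G X B).ncard := by
        rw [Set.ncard_union_add_ncard_inter]

/-- For a minimal separator, every vertex of `S` belongs to the canonical cut of its
reachability set. -/
lemma S_subset_cutof (G : SimpleGraph V) (X : Set V) {Y S : Set V}
    (hmin : IsMinSep G X Y S) : S ⊆ cutof G X (greach G X S) := by
  intro s hs
  by_contra hc
  have hsR : s ∉ greach G X S := fun h => h.1 hs
  have h2 : ¬(s ∈ X ∨ ∃ r ∈ greach G X S, G.Adj r s) := fun h => hc ⟨hsR, h⟩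
  push_neg at h2
  obtain ⟨hsX, hsN⟩ := h2
  have hsub : greach G X (S \ {s}) ⊆ greach G X S := by
    intro v hv
    refine greach_rec G X (fun w => w ∈ greach G X S) ?_ ?_ v hv
    · intro x hx hxT
      have hxS : x ∉ S := fun hxS => hxT ⟨hxS, fun he => hsX (he ▸ hx)⟩
      exact mem_greach_start G X hx hxS
    · intro u w hu _ huw hwT
      by_cases hwS : w ∈ S
      · have hws : w = s := by
          by_contra hne
          exact hwT ⟨hwS, hne⟩
        exact absurd (show G.Adj u s from hws ▸ huw) (hsN u hu)
      · exact greach_adj G X hu huw hwS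
  refine hmin.2 (S \ {s}) (Set.sdiff_singleton_ssubset.mpr hs) ?_
  have hY := hmin.1
  rw [IsSep, Set.eq_empty_iff_forall_notMem] at hY ⊢
  rintro v ⟨hvY, hvg⟩
  exact hY v ⟨hvY, hsub hvg⟩

/-- Any vertex reachable around `T` but not around `S` forces `greach G X T` to meet `S`. -/
lemma hits (G : SimpleGraph V) (X : Set V) {S T : Set V} {v : V}
    (hv : v ∈ greach G X T) (hvS : v ∉ greach G X S) : (S ∩ greach G X T).Nonempty := by
  have key := greach_rec G X
      (fun w => w ∈ greach G X S ∨ (S ∩ greach G X T).Nonempty) ?_ ?_ v hv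
  · rcases key with h | h
    · exact absurd h hvS
    · exact h
  · intro x hx hxT
    by_cases hxS : x ∈ S
    · exact Or.inr ⟨x, hxS, mem_greach_start G X hx hxT⟩
    · exact Or.inl (mem_greach_start G X hx hxS)
  · intro u w hu hug huw hwT
    rcases hu with hu | hu
    · by_cases hwS : w ∈ S
      · exact Or.inr ⟨w, hwS, greach_adj G X hug huw hwT⟩
      · exact Or.inl (greach_adj G X hu huw hwS)
    · exact Or.inr hu

/-- Lower bound on the size of the canonical cut of an uncrossed region. -/
lemma cost_ge [Fintype V] (G : SimpleGraph V) (X : Set V) {Y S : Set V}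
    (hS : IsImpSep G X Y S) {D : Set V}
    (hRD : greach G X S ⊆ D) (hDY : D ∩ Y = ∅) :
    S.ncard ≤ (cutof G X (greach G X (cutof G X D))).ncard ∧
    ((S ∩ D).Nonempty → S.ncard + 1 ≤ (cutof G X (greach G X (cutof G X D))).ncard) := by
  set M := greach G X (cutof G X D) with hMdef
  have hMD : M ⊆ D := greach_cutof_subset G X D
  have hRM : greach G X S ⊆ M := subset_greach_cutof G X hRD
  have hMfix : greach G X (cutof G X M) = M := greach_cutof_greach G X (cutof G X D)
  have hMY : M ∩ Y = ∅ := by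
    rw [Set.eq_empty_iff_forall_notMem] at hDY ⊢
    rintro v ⟨h1, h2⟩
    exact hDY v ⟨hMD h1, h2⟩
  by_cases hMR : M = greach G X S
  · have hcut : cutof G X M = S := by
      rw [hMR]
      exact subset_antisymm (cutof_greach_subset G X S) (S_subset_cutof G X hS.1)
    constructor
    · rw [hcut]
    · rintro ⟨s, hsS, hsD⟩
      exfalso
      obtain ⟨hsR, hor⟩ := S_subset_cutof G X hS.1 hsS
      have hsnc : s ∉ cutof G X D := fun hh => hh.1 hsD
      have hsM : s ∈ M := by
        rcases hor with hX | ⟨r, hr, hadj⟩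
        · exact mem_greach_start G X hX hsnc
        · exact greach_adj G X (hRM hr) hadj hsnc
      rw [hMR] at hsM
      exact hsM.1 hsS
  · have hstrict : greach G X S ⊂ M := hRM.ssubset_of_ne (fun h => hMR h.symm)
    have hk1 : S.ncard + 1 ≤ (cutof G X M).ncard := by
      by_contra hcon
      have hle : (cutof G X M).ncard ≤ S.ncard := by omega
      refine hS.2 ⟨cutof G X M, ?_, hle, ?_⟩
      · show Y ∩ greach G X (cutof G X M) = ∅
        rw [hMfix, Set.inter_comm]
        exact hMY
      · rw [hMfix]
        exact hstrict
    exact ⟨le_trans (Nat.le_succ _) hk1, fun _ => hk1⟩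

/-- The uncrossing/counting argument: a family of label-disjointly-witnessed dominating
regions for an important separator has size at most `2 |S|`. -/
lemma counting [Fintype V] (G : SimpleGraph V) (X : Set V) {ι : Type} [DecidableEq ι]
    {Y S : Set V} (hS : IsImpSep G X Y S) (Tf : Finset ι) (A : ι → Set V)
    (hA1 : ∀ j ∈ Tf, greach G X S ⊆ A j)
    (hA2 : ∀ j ∈ Tf, (cutof G X (A j)).ncard ≤ S.ncard)
    (hA3 : ∀ j ∈ Tf, (S ∩ A j).Nonempty)
    (hA4 : ∀ j ∈ Tf, ∀ u ∈ Tf, j ≠ u → A j ∩ A u ∩ Y = ∅) :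
    Tf.card ≤ 2 * S.ncard := by
  have claim : ∀ T : Finset ι, T ⊆ Tf → T.Nonempty →
      (cutof G X (⋃ j ∈ T, A j)).ncard + T.card ≤
        S.ncard + (S ∩ ⋃ j ∈ T, A j).ncard := by
    intro T
    induction T using Finset.induction_on with
    | empty => intro _ h; exact absurd h (by simp)
    | @insert a T ha ih =>
      intro hsub _
      have haTf : a ∈ Tf := hsub (Finset.mem_insert_self a T)
      have hTsub : T ⊆ Tf := fun x hx => hsub (Finset.mem_insert_of_mem hx)
      rcases T.eq_empty_or_nonempty with hemp | hne
      · subst hemp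
        have hU : (⋃ j ∈ insert a (∅ : Finset ι), A j) = A a := by simp
        rw [hU]
        have h2 := hA2 a haTf
        have h3 : 0 < (S ∩ A a).ncard := (Set.ncard_pos (Set.toFinite _)).mpr (hA3 a haTf)
        have hc : (insert a (∅ : Finset ι)).card = 1 := by simp
        omega
      · have ihs := ih hTsub hne
        have hUeq : (⋃ j ∈ insert a T, A j) = A a ∪ ⋃ j ∈ T, A j :=
          Finset.set_biUnion_insert a T A
        set UT := ⋃ j ∈ T, A j with hUT
        have hRU : greach G X S ⊆ UT := by
          obtain ⟨j0, hj0⟩ := hne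
          intro v hv
          exact Set.mem_biUnion hj0 (hA1 j0 (hTsub hj0) hv)
        have hRD : greach G X S ⊆ A a ∩ UT :=
          Set.subset_inter (hA1 a haTf) hRU
        have hDY : (A a ∩ UT) ∩ Y = ∅ := by
          rw [Set.eq_empty_iff_forall_notMem]
          rintro v ⟨⟨hva, hvU⟩, hvY⟩
          rw [hUT, Set.mem_iUnion₂] at hvU
          obtain ⟨u, hu, hvu⟩ := hvU
          have hne' : a ≠ u := fun he => ha (he ▸ hu)
          have h4 := hA4 a haTf u (hTsub hu) hne'
          rw [Set.eq_empty_iff_forall_notMem] at h4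
          exact h4 v ⟨⟨hva, hvu⟩, hvY⟩
        obtain ⟨hc1, hc2⟩ := cost_ge G X hS hRD hDY
        have hMle : (cutof G X (greach G X (cutof G X (A a ∩ UT)))).ncard ≤
            (cutof G X (A a ∩ UT)).ncard :=
          Set.ncard_le_ncard (cutof_greach_subset G X (cutof G X (A a ∩ UT)))
            (Set.toFinite _)
        have hsub2 := cutof_submod G X (A a) UT
        have hmono : (S ∩ UT).ncard ≤ (S ∩ (A a ∪ UT)).ncard :=
          Set.ncard_le_ncard (Set.inter_subset_inter_right S Set.subset_union_right)
            (Set.toFinite _)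
        have hcard : (insert a T).card = T.card + 1 := Finset.card_insert_of_notMem ha
        have h6 := hA2 a haTf
        rw [hUeq, hcard]
        by_cases hsh : (S ∩ (A a ∩ UT)).Nonempty
        · have h5 := hc2 hsh
          omega
        · have h5 := hc1
          have hdisj : Disjoint (S ∩ A a) (S ∩ UT) := by
            rw [Set.disjoint_iff_inter_eq_empty]
            rw [Set.not_nonempty_iff_eq_empty] at hsh
            rw [Set.eq_empty_iff_forall_notMem] at hsh ⊢
            rintro v ⟨⟨h1, h2⟩, ⟨_, h4⟩⟩
            exact hsh v ⟨h1, h2, h4⟩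
          have hcardU : (S ∩ (A a ∪ UT)).ncard = (S ∩ A a).ncard + (S ∩ UT).ncard := by
            rw [Set.inter_union_distrib_left]
            exact Set.ncard_union_eq hdisj (Set.toFinite _) (Set.toFinite _)
          have h7 : 0 < (S ∩ A a).ncard :=
            (Set.ncard_pos (Set.toFinite _)).mpr (hA3 a haTf)
          omega
  rcases Tf.eq_empty_or_nonempty with hemp | hne
  · simp [hemp]
  · have hmain := claim Tf (subset_refl _) hne
    have hSle : (S ∩ ⋃ j ∈ Tf, A j).ncard ≤ S.ncard :=
      Set.ncard_le_ncard Set.inter_subset_left (Set.toFinite _)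
    omega

lemma labelVerts_mono {L : Type} (f : V → Set L) {J₁ J₂ : Set L} (h : J₁ ⊆ J₂) :
    labelVerts f J₁ ⊆ labelVerts f J₂ := by
  rintro v ⟨l, hl1, hl2⟩
  exact ⟨l, hl1, h hl2⟩

/-- small witnessing label set: if `S` is an important
`(X, V_G(J))`-separator of size `k` in a labeled graph, then there is `J* ⊆ J` with
`|J*| ≤ Σ_{i=1}^k (i+1) = k(k+3)/2` such that `S` is an important
`(X, V_G(J*))`-separator. -/
theorem stmt12 [Fintype V] {L : Type} [Fintype L] (G : SimpleGraph V)
    (f : V → Set L) (X : Set V) (J : Set L) (S : Set V) (k : ℕ) (hk : S.ncard = k)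
    (hS : IsImpSep G X (labelVerts f J) S) :
    ∃ Jstar ⊆ J, Jstar.ncard ≤ k * (k + 3) / 2 ∧
      IsImpSep G X (labelVerts f Jstar) S := by
  classical
  set C : Set (Finset L) := {T | ↑T ⊆ J ∧ IsImpSep G X (labelVerts f ↑T) S} with hC
  have hCne : C.Nonempty := by
    refine ⟨(Set.toFinite J).toFinset, ?_⟩
    rw [hC, Set.mem_setOf_eq, Set.Finite.coe_toFinset]
    exact ⟨subset_rfl, hS⟩
  obtain ⟨Tf, hTfC, hTfmin⟩ := Set.exists_min_image C (fun T => T.card) (Set.toFinite C) hCne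
  obtain ⟨hTfJ, hTfImp⟩ := hTfC
  set Ystar := labelVerts f (↑Tf : Set L) with hYdef
  -- every label in Tf yields a dominating-shaped separator with a Ystar witness
  have hW : ∀ j : L, ∃ Tj : Set V, j ∈ Tf →
      IsSep G X (labelVerts f ((↑Tf : Set L) \ {j})) Tj ∧ Tj.ncard ≤ S.ncard ∧
      greach G X S ⊂ greach G X Tj ∧ (greach G X Tj ∩ Ystar).Nonempty := by
    intro j
    by_cases hj : j ∈ Tf
    case neg => exact ⟨∅, fun h => absurd h hj⟩
    have herase : Tf.erase j ∉ C := by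
      intro hmem
      exact absurd (hTfmin _ hmem) (not_le.mpr (Finset.card_erase_lt_of_mem hj))
    have hcoe : ((Tf.erase j : Finset L) : Set L) = (↑Tf : Set L) \ {j} :=
      Finset.coe_erase j Tf
    have hsubJ : ((Tf.erase j : Finset L) : Set L) ⊆ J := by
      rw [hcoe]; exact fun x hx => hTfJ hx.1
    have hnImp : ¬ IsImpSep G X (labelVerts f ((↑Tf : Set L) \ {j})) S := by
      intro h
      exact herase ⟨hsubJ, by rw [hcoe]; exact h⟩
    set Y' := labelVerts f ((↑Tf : Set L) \ {j}) with hY'def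
    have hY'sub : Y' ⊆ Ystar := labelVerts_mono f Set.diff_subset
    have hsepY' : IsSep G X Y' S := by
      have h1 := hTfImp.1.1
      rw [IsSep, Set.eq_empty_iff_forall_notMem] at h1 ⊢
      rintro v ⟨hv1, hv2⟩
      exact h1 v ⟨hY'sub hv1, hv2⟩
    by_cases hdom : ∃ S', IsSep G X Y' S' ∧ SepDominates G X S' S
    · obtain ⟨S', hsep', hd1, hd2⟩ := hdom
      have hwit : (greach G X S' ∩ Ystar).Nonempty := by
        by_contra hcon
        rw [Set.not_nonempty_iff_eq_empty] at hcon
        refine hTfImp.2 ⟨S', ?_, hd1, hd2⟩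
        show Ystar ∩ greach G X S' = ∅
        rw [Set.inter_comm]; exact hcon
      exact ⟨S', fun _ => ⟨hsep', hd1, hd2, hwit⟩⟩
    · have hnMin : ¬ IsMinSep G X Y' S := fun hmin => hnImp ⟨hmin, hdom⟩
      have hex : ∃ S', S' ⊂ S ∧ IsSep G X Y' S' := by
        by_contra hcon
        push_neg at hcon
        exact hnMin ⟨hsepY', fun S' hss hsep => hcon S' hss hsep⟩
      obtain ⟨S', hss, hsep'⟩ := hex
      have hsubR : greach G X S ⊆ greach G X S' := greach_anti G X hss.subset
      have hnsepY : ¬ IsSep G X Ystar S' := hTfImp.1.2 S' hss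
      have hwit : ∃ y, y ∈ Ystar ∩ greach G X S' := by
        by_contra hcon
        push_neg at hcon
        refine hnsepY ?_
        rw [IsSep, Set.eq_empty_iff_forall_notMem]
        exact hcon
      obtain ⟨y, hy1, hy2⟩ := hwit
      have hyR : y ∉ greach G X S := by
        intro h
        have h1 := hTfImp.1.1
        rw [IsSep, Set.eq_empty_iff_forall_notMem] at h1
        exact h1 y ⟨hy1, h⟩
      refine ⟨S', fun _ => ⟨hsep', le_of_lt (Set.ncard_lt_ncard hss (Set.toFinite S)),
        hsubR.ssubset_of_ne (fun he => hyR (he ▸ hy2)), ⟨y, hy2, hy1⟩⟩⟩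
  choose TT hTT using hW
  have hcount : Tf.card ≤ 2 * S.ncard := by
    refine counting G X hTfImp Tf (fun j => greach G X (TT j)) ?_ ?_ ?_ ?_
    · intro j hj
      exact ((hTT j hj).2.2.1).subset
    · intro j hj
      exact le_trans (Set.ncard_le_ncard (cutof_greach_subset G X (TT j)) (Set.toFinite _))
        (hTT j hj).2.1
    · intro j hj
      obtain ⟨v, hv, hvn⟩ := Set.exists_of_ssubset (hTT j hj).2.2.1
      exact hits G X hv hvn
    · intro j hj u hu hne
      rw [Set.eq_empty_iff_forall_notMem]
      rintro v ⟨⟨hvj, hvu⟩, hvY⟩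
      obtain ⟨l, hlf, hlT⟩ := hvY
      have hlj : l = j := by
        by_contra hne'
        have hvmem : v ∈ labelVerts f ((↑Tf : Set L) \ {j}) := ⟨l, hlf, hlT, hne'⟩
        have hsep := (hTT j hj).1
        rw [IsSep, Set.eq_empty_iff_forall_notMem] at hsep
        exact hsep v ⟨hvmem, hvj⟩
      have hlu : l = u := by
        by_contra hne'
        have hvmem : v ∈ labelVerts f ((↑Tf : Set L) \ {u}) := ⟨l, hlf, hlT, hne'⟩
        have hsep := (hTT u hu).1
        rw [IsSep, Set.eq_empty_iff_forall_notMem] at hsep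
        exact hsep v ⟨hvmem, hvu⟩
      exact hne (hlj ▸ hlu)
  refine ⟨(↑Tf : Set L), hTfJ, ?_, hTfImp⟩
  rw [Set.ncard_coe_finset]
  have h2k : 2 * k ≤ k * (k + 3) / 2 := by
    have h4 : 4 * k ≤ k * (k + 3) := by
      rcases Nat.eq_zero_or_pos k with h | h
      · simp [h]
      · nlinarith
    calc 2 * k = 4 * k / 2 := by omega
      _ ≤ k * (k + 3) / 2 := Nat.div_le_div_right h4
  rw [hk] at hcount
  omega
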